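/- Let φ(z) = (z² − 1)/(2z), extended to ℙ¹(ℚ) = ℚ ∪ {∞} by φ(0) = ∞ and φ(∞) = ∞. Then the set of rational preperiodic points of φ is exactly {0, ∞, 1, −1}, with orbit structure: ∞ is a fixed point, φ(0) = ∞, and φ(1) = φ(−1) = 0. -/

import Mathlib

/-!
The rational preperiodic points of `φ(z) = (z² − 1)/(2z)` are exactly
`{0, ∞, 1, −1}`, with `∞` fixed, `φ(0) = ∞`, and `φ(1) = φ(−1) = 0`.

We model ℙ¹(ℚ) as `Option ℚ`, with `none` playing the role of ∞;
`φ(0) = ∞` and `φ(∞) = ∞`.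
-/

/-- The map `φ(z) = (z² − 1)/(2z)` on `ℙ¹(ℚ)`, with `φ(0) = ∞` and
`φ(∞) = ∞`. -/
def phi17 : Option ℚ → Option ℚ
  | none => none
  | some x => if x = 0 then none else some ((x ^ 2 - 1) / (2 * x))

/-- A point is preperiodic for a self-map `f` if two distinct iterates of `f`
agree on it, i.e. its forward orbit is finite. -/
def IsPreperiodicPt {X : Type*} (f : X → X) (α : X) : Prop :=
  ∃ i j : ℕ, i < j ∧ f^[i] α = f^[j] α

/-- Naive height of a rational number. -/
def ht (q : ℚ) : ℕ := max q.num.natAbs q.den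

lemma key_growth (q : ℚ) (h5 : 5 ≤ ht q) : ht q < ht ((q ^ 2 - 1) / (2 * q)) := by
  have hq0 : q ≠ 0 := by
    rintro rfl; simp [ht] at h5
  set a : ℤ := q.num with ha
  set b : ℤ := (q.den : ℤ) with hbdef
  have hb : 0 < b := Int.natCast_pos.mpr q.pos
  have ha0 : a ≠ 0 := Rat.num_ne_zero.mpr hq0
  have hab : IsCoprime a b := by
    rw [Int.isCoprime_iff_gcd_eq_one]
    show Nat.gcd q.num.natAbs (q.den : ℤ).natAbs = 1
    exact q.reduced
  set r : ℚ := (q ^ 2 - 1) / (2 * q) with hr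
  set D : ℤ := (r.den : ℤ) with hD
  have hDpos : 0 < D := Int.natCast_pos.mpr r.pos
  have hcross : (r.num : ℚ) * (2 * a * b) = ((a : ℚ) ^ 2 - (b : ℚ) ^ 2) * D := by
    have hq : (a : ℚ) / (b : ℚ) = q := by
      rw [ha, hbdef]; push_cast; exact Rat.num_div_den q
    have hrr : (r.num : ℚ) / (r.den : ℚ) = r := Rat.num_div_den r
    have hb0 : (b : ℚ) ≠ 0 := by positivity
    have hd0 : (r.den : ℚ) ≠ 0 := by positivity
    have h1 : r * (2 * q) = q ^ 2 - 1 := by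
      rw [hr]; field_simp
    have h2 : ((r.num : ℚ) / (r.den : ℚ)) * (2 * ((a : ℚ) / (b : ℚ))) = ((a : ℚ) / b) ^ 2 - 1 := by
      rw [hrr, hq]; exact h1
    field_simp at h2
    have h3 : (r.num : ℚ) * (2 * a * b) * b = ((a : ℚ) ^ 2 - (b : ℚ) ^ 2) * D * b := by
      rw [hD]; push_cast; linear_combination (b : ℚ) * h2
    exact mul_right_cancel₀ hb0 h3
  have hZ : r.num * (2 * a * b) = (a ^ 2 - b ^ 2) * D := by exact_mod_cast hcross
  have hcopr : IsCoprime D r.num := by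
    rw [Int.isCoprime_iff_gcd_eq_one]
    show Nat.gcd (r.den : ℤ).natAbs r.num.natAbs = 1
    rw [Nat.gcd_comm]
    exact r.reduced
  set N : ℤ := r.num with hN
  have hhq : (ht q : ℤ) = max |a| b := by
    rw [ht, Nat.cast_max]
    congr 1
    exact (Int.abs_eq_natAbs a).symm
  have hhr : (ht r : ℤ) = max |N| D := by
    rw [ht, Nat.cast_max]
    congr 1
    exact (Int.abs_eq_natAbs N).symm
  have h5' : (5 : ℤ) ≤ max |a| b := by rw [← hhq]; exact_mod_cast h5
  rw [show (ht ((q ^ 2 - 1) / (2 * q)) = ht r) from rfl]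
  have hgoal : ∀ x y : ℕ, (x:ℤ) < (y:ℤ) → x < y := fun x y h => by exact_mod_cast h
  apply hgoal
  rw [hhq, hhr]
  clear_value N D a b
  clear hN hD ha hbdef hq0 hhq hhr h5 hgoal hr
  clear_value r
  have hDdvd : D ∣ 2 * a * b := by
    have h1 : N * (2 * a * b) = D * (a ^ 2 - b ^ 2) := by rw [hZ]; ring
    exact hcopr.dvd_of_dvd_mul_left ⟨_, h1⟩
  obtain ⟨k, hk⟩ := hDdvd
  have hnk : N * k = a ^ 2 - b ^ 2 := by
    have h2 : N * k * D = (a ^ 2 - b ^ 2) * D := by rw [← hZ, hk]; ring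
    exact mul_right_cancel₀ hDpos.ne' h2
  -- coprimality of a^2 - b^2 with a*b
  have hca : IsCoprime (a ^ 2 - b ^ 2) a := by
    have h1 : IsCoprime (-(b * b)) a := ((hab.symm.mul_left hab.symm)).neg_left
    have h2 := h1.add_mul_left_left a
    have : -(b * b) + a * a = a ^ 2 - b ^ 2 := by ring
    rwa [this] at h2
  have hcb : IsCoprime (a ^ 2 - b ^ 2) b := by
    have h1 : IsCoprime (a * a) b := hab.mul_left hab
    have h2 := h1.add_mul_left_left (-b)
    have : a * a + b * -b = a ^ 2 - b ^ 2 := by ring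
    rwa [this] at h2
  have hkdvd : k ∣ a ^ 2 - b ^ 2 := Dvd.intro_left _ hnk
  have hkcop : IsCoprime k (a * b) := (hca.mul_right hcb).of_isCoprime_of_dvd_left hkdvd
  have hk2 : k ∣ 2 := hkcop.dvd_of_dvd_mul_right ⟨D, by linear_combination hk⟩
  clear hZ hcross
  have hkne : k ≠ 0 := by
    rintro rfl
    rw [mul_zero] at hk
    exact mul_ne_zero (mul_ne_zero two_ne_zero ha0) hb.ne' hk
  have habs : |k| ≤ 2 := Int.le_of_dvd (by norm_num) ((abs_dvd _ _).mpr hk2)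
  have habs1 : 1 ≤ |k| := Int.one_le_abs hkne
  -- absolute value relations
  have e1 : |a ^ 2 - b ^ 2| = |N| * |k| := by rw [← hnk, abs_mul]
  have e2 : 2 * |a| * b = D * |k| := by
    have := congrArg abs hk
    rw [abs_mul, abs_mul, abs_mul] at this
    rw [abs_of_pos hb, abs_of_pos hDpos] at this
    simpa using this
  have key : max |a| b ^ 2 ≤ |a ^ 2 - b ^ 2| + 2 * |a| * b := by
    rcases le_total |a| b with h | h
    · rw [max_eq_right h]
      have : b ^ 2 - a ^ 2 ≤ |a ^ 2 - b ^ 2| := by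
        rw [abs_sub_comm]; exact le_abs_self _
      nlinarith [abs_nonneg a, sq_abs a]
    · rw [max_eq_left h]
      have : a ^ 2 - b ^ 2 ≤ |a ^ 2 - b ^ 2| := le_abs_self _
      nlinarith [abs_nonneg a, sq_abs a, hb]
  have hN : |N| ≤ max |N| D := le_max_left _ _
  have hDm : D ≤ max |N| D := le_max_right _ _
  have hM : |a ^ 2 - b ^ 2| ≤ 2 * |N| := by
    rw [e1]; nlinarith [abs_nonneg N]
  have hT : 2 * |a| * b ≤ 2 * D := by
    rw [e2]; nlinarith
  nlinarith [le_max_left |a| b, le_max_right |a| b, abs_nonneg a]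

lemma ht_ne_zero (q : ℚ) (h : 5 ≤ ht q) : q ≠ 0 := by
  rintro rfl; simp [ht] at h

lemma orbit_growth (q : ℚ) (h5 : 5 ≤ ht q) (n : ℕ) :
    ∃ r : ℚ, phi17^[n] (some q) = some r ∧ 5 ≤ ht r ∧ ht q + n ≤ ht r := by
  induction n with
  | zero => exact ⟨q, rfl, h5, by omega⟩
  | succ n ih =>
    obtain ⟨r, hr, hr5, hrg⟩ := ih
    have hr0 : r ≠ 0 := ht_ne_zero r hr5
    refine ⟨(r ^ 2 - 1) / (2 * r), ?_, ?_, ?_⟩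
    · rw [Function.iterate_succ_apply', hr]
      simp [phi17, hr0]
    · have := key_growth r hr5; omega
    · have := key_growth r hr5; omega

lemma not_prep_of_escape (α : Option ℚ) (m : ℕ) (r : ℚ)
    (h1 : phi17^[m] α = some r) (h2 : 5 ≤ ht r) : ¬ IsPreperiodicPt phi17 α := by
  rintro ⟨i, j, hij, he⟩
  have hper : ∀ n : ℕ, phi17^[i + n] α = phi17^[i + n + (j - i)] α := by
    intro n
    induction n with
    | zero =>
      rw [show i + 0 + (j - i) = j by omega]
      simpa using he
    | succ n ih =>
      rw [show i + (n + 1) + (j - i) = (i + n + (j - i)) + 1 by omega,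
        show i + (n + 1) = (i + n) + 1 from rfl,
        Function.iterate_succ_apply', Function.iterate_succ_apply', ih]
  obtain ⟨s, hs, hs5, _⟩ := orbit_growth r h2 i
  have h1' : phi17^[i + m] α = some s := by
    rw [Function.iterate_add_apply, h1, hs]
  have hfix : phi17^[j - i] (some s) = some s := by
    calc phi17^[j - i] (some s) = phi17^[j - i] (phi17^[i + m] α) := by rw [h1']
      _ = phi17^[(j - i) + (i + m)] α := (Function.iterate_add_apply _ _ _ _).symm
      _ = phi17^[i + m] α := by
          rw [show (j - i) + (i + m) = i + m + (j - i) by omega]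
          exact (hper m).symm
      _ = some s := h1'
  obtain ⟨t, htt, _, htg⟩ := orbit_growth s hs5 (j - i)
  rw [hfix] at htt
  have : t = s := by injection htt.symm
  subst this
  omega

lemma escape2 (c : ℚ) (a : ℤ) (b : ℕ) (hb : 0 < b) (hcop : Nat.Coprime a.natAbs b)
    (hht : 5 ≤ max a.natAbs b) (m : ℕ) (hit : phi17^[m] (some c) = some ((a : ℚ) / b)) :
    ¬ IsPreperiodicPt phi17 (some c) := by
  apply not_prep_of_escape _ m _ hit
  have hb' : (0 : ℤ) < (b : ℤ) := by exact_mod_cast hb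
  have hnum : ((a : ℚ) / b).num = a := by
    rw [show ((b : ℕ) : ℚ) = ((b : ℤ) : ℚ) by push_cast; ring]
    exact Rat.num_div_eq_of_coprime hb' (by simpa using hcop)
  have hden : (((a : ℚ) / b).den : ℤ) = (b : ℤ) := by
    rw [show ((b : ℕ) : ℚ) = ((b : ℤ) : ℚ) by push_cast; ring]
    exact Rat.den_div_eq_of_coprime hb' (by simpa using hcop)
  have hden' : ((a : ℚ) / b).den = b := by exact_mod_cast hden
  rw [ht, hnum, hden']
  exact hht


set_option linter.unusedTactic false in
set_option maxHeartbeats 1000000 in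
lemma small_case (n : ℤ) (d : ℕ) (hn : n.natAbs ≤ 4) (hd1 : 1 ≤ d) (hd4 : d ≤ 4)
    (h0 : (n : ℚ) / d ≠ 0) (h1 : (n : ℚ) / d ≠ 1) (hm1 : (n : ℚ) / d ≠ -1) :
    ¬ IsPreperiodicPt phi17 (some ((n : ℚ) / d)) := by
  have hn' : -4 ≤ n ∧ n ≤ 4 := by omega
  obtain ⟨hn1, hn2⟩ := hn'
  clear hn
  interval_cases n <;> interval_cases d <;>
    first
    | (exfalso; apply h0; norm_num; done)
    | (exfalso; apply h1; norm_num; done)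
    | (exfalso; apply hm1; norm_num; done)
    | (refine escape2 _ (15) 8 (by norm_num) (by norm_num) (by norm_num) 1 ?_
       norm_num [Function.iterate_succ, Function.comp, phi17]
       done)
    | (refine escape2 _ (-15) 8 (by norm_num) (by norm_num) (by norm_num) 1 ?_
       norm_num [Function.iterate_succ, Function.comp, phi17]
       done)
    | (refine escape2 _ (5) 12 (by norm_num) (by norm_num) (by norm_num) 1 ?_
       norm_num [Function.iterate_succ, Function.comp, phi17]
       done)
    | (refine escape2 _ (-5) 12 (by norm_num) (by norm_num) (by norm_num) 1 ?_
       norm_num [Function.iterate_succ, Function.comp, phi17]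
       done)
    | (refine escape2 _ (7) 24 (by norm_num) (by norm_num) (by norm_num) 1 ?_
       norm_num [Function.iterate_succ, Function.comp, phi17]
       done)
    | (refine escape2 _ (-7) 24 (by norm_num) (by norm_num) (by norm_num) 1 ?_
       norm_num [Function.iterate_succ, Function.comp, phi17]
       done)
    | (refine escape2 _ (7) 24 (by norm_num) (by norm_num) (by norm_num) 2 ?_
       norm_num [Function.iterate_succ, Function.comp, phi17]
       done)
    | (refine escape2 _ (-7) 24 (by norm_num) (by norm_num) (by norm_num) 2 ?_
       norm_num [Function.iterate_succ, Function.comp, phi17]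
       done)

/-- The set of rational preperiodic points of `φ(z) = (z² − 1)/(2z)` is
exactly `{0, ∞, 1, −1}`, with `∞` fixed, `φ(0) = ∞`, and
`φ(1) = φ(−1) = 0`. -/
theorem phi17_preperiodic_points :
    {α : Option ℚ | IsPreperiodicPt phi17 α} =
        ({some 0, none, some 1, some (-1)} : Set (Option ℚ)) ∧
      phi17 none = none ∧ phi17 (some 0) = none ∧
      phi17 (some 1) = some 0 ∧ phi17 (some (-1)) = some 0 := by
  have e0 : phi17 (some 0) = none := by norm_num [phi17]
  have e1 : phi17 (some 1) = some 0 := by norm_num [phi17]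
  have em1 : phi17 (some (-1)) = some 0 := by norm_num [phi17]
  refine ⟨?_, rfl, e0, e1, em1⟩
  ext α
  simp only [Set.mem_setOf_eq, Set.mem_insert_iff, Set.mem_singleton_iff]
  constructor
  · intro hp
    match α with
    | none => exact Or.inr (Or.inl rfl)
    | some q =>
      by_cases hq0 : q = 0
      · exact Or.inl (by rw [hq0])
      by_cases hq1 : q = 1
      · exact Or.inr (Or.inr (Or.inl (by rw [hq1])))
      by_cases hqm : q = -1
      · exact Or.inr (Or.inr (Or.inr (by rw [hqm])))
      exfalso
      by_cases hbig : 5 ≤ ht q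
      · exact not_prep_of_escape (some q) 0 q rfl hbig hp
      · push_neg at hbig
        rw [ht] at hbig
        have hnum : q.num.natAbs ≤ 4 := by omega
        have hden : q.den ≤ 4 := by omega
        have hq' : (q.num : ℚ) / (q.den : ℚ) = q := Rat.num_div_den q
        refine small_case q.num q.den hnum q.pos hden ?_ ?_ ?_ ?_
        · rw [hq']; exact hq0
        · rw [hq']; exact hq1
        · rw [hq']; exact hqm
        · rw [hq']; exact hp
  · rintro (h | h | h | h) <;> subst h
    · exact ⟨1, 2, by norm_num, by
        simp only [Function.iterate_succ, Function.iterate_zero, Function.comp_apply,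
          Function.comp, id_eq, e0]
        rfl⟩
    · exact ⟨0, 1, by norm_num, rfl⟩
    · exact ⟨2, 3, by norm_num, by
        simp only [Function.iterate_succ, Function.iterate_zero, Function.comp_apply,
          Function.comp, id_eq, e1, e0]
        rfl⟩
    · exact ⟨2, 3, by norm_num, by
        simp only [Function.iterate_succ, Function.iterate_zero, Function.comp_apply,
          Function.comp, id_eq, em1, e0]
        rfl⟩
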